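/- Let Q(x,y)=ax²+hxy+by² be an indefinite integer binary quadratic form representing zero, i.e. with discriminant D=h²−4ab a positive perfect square. Then for every sequence w:ℕ→{L,R}, Λ_Q(w) = 2·Λ(w). -/

import Mathlib

open Filter Matrix
open scoped ENNReal NNReal

noncomputable section

def Lm : Matrix (Fin 2) (Fin 2) ℤ := !![1, 1; 0, 1]

def Rm : Matrix (Fin 2) (Fin 2) ℤ := !![1, 0; 1, 1]

/-- `pathMat w n = w 0 * w 1 * ⋯ * w (n-1)`. -/
def pathMat (w : ℕ → Matrix (Fin 2) (Fin 2) ℤ) (n : ℕ) : Matrix (Fin 2) (Fin 2) ℤ :=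
  ((List.range n).map w).prod

/-- The value of the form `a x² + h x y + b y²`. -/
def Qval (a h b x y : ℤ) : ℤ := a * x ^ 2 + h * x * y + b * y ^ 2

/-- `|Qₙ(w)| = max(|aₙ|, |bₙ|, |cₙ|)` where the values are taken at the n-th superbase. -/
def Qnorm (a h b : ℤ) (w : ℕ → Matrix (Fin 2) (Fin 2) ℤ) (n : ℕ) : ℤ :=
  max |Qval a h b (pathMat w n 0 0) (pathMat w n 1 0)|
    (max |Qval a h b (pathMat w n 0 1) (pathMat w n 1 1)|
      |Qval a h b (pathMat w n 0 0 + pathMat w n 0 1) (pathMat w n 1 0 + pathMat w n 1 1)|)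

/-- The Lyapunov exponent `Λ_Q(w)` of the values of `Q` along the path `w`. -/
def LyapQ (a h b : ℤ) (w : ℕ → Matrix (Fin 2) (Fin 2) ℤ) : ℝ :=
  limsup (fun n : ℕ => Real.log (Qnorm a h b w n : ℝ) / (n : ℝ)) atTop

/-- The matrix Lyapunov exponent `Λ(w)`, via the spectral radius over ℂ. -/
def Lyap (w : ℕ → Matrix (Fin 2) (Fin 2) ℤ) : ℝ :=
  limsup (fun n : ℕ =>
    Real.log ((spectralRadius ℂ ((pathMat w n).map ((↑) : ℤ → ℂ))).toReal) / (n : ℝ)) atTop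

/-! ### Auxiliary material -/

lemma pathMat_zero (w : ℕ → Matrix (Fin 2) (Fin 2) ℤ) : pathMat w 0 = 1 := rfl

lemma pathMat_succ (w : ℕ → Matrix (Fin 2) (Fin 2) ℤ) (n : ℕ) :
    pathMat w (n+1) = pathMat w n * w n := by
  unfold pathMat
  rw [List.range_succ, List.map_append, List.prod_append]
  simp

lemma mul_Lm_apply (A : Matrix (Fin 2) (Fin 2) ℤ) :
    (A * Lm) 0 0 = A 0 0 ∧ (A * Lm) 0 1 = A 0 0 + A 0 1 ∧
    (A * Lm) 1 0 = A 1 0 ∧ (A * Lm) 1 1 = A 1 0 + A 1 1 := by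
  refine ⟨?_, ?_, ?_, ?_⟩ <;> simp [Matrix.mul_apply, Fin.sum_univ_two, Lm]

lemma mul_Rm_apply (A : Matrix (Fin 2) (Fin 2) ℤ) :
    (A * Rm) 0 0 = A 0 0 + A 0 1 ∧ (A * Rm) 0 1 = A 0 1 ∧
    (A * Rm) 1 0 = A 1 0 + A 1 1 ∧ (A * Rm) 1 1 = A 1 1 := by
  refine ⟨?_, ?_, ?_, ?_⟩ <;> simp [Matrix.mul_apply, Fin.sum_univ_two, Rm]

def pe (w : ℕ → Matrix (Fin 2) (Fin 2) ℤ) (n : ℕ) : ℤ := pathMat w n 0 0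
def qe (w : ℕ → Matrix (Fin 2) (Fin 2) ℤ) (n : ℕ) : ℤ := pathMat w n 0 1
def re (w : ℕ → Matrix (Fin 2) (Fin 2) ℤ) (n : ℕ) : ℤ := pathMat w n 1 0
def se (w : ℕ → Matrix (Fin 2) (Fin 2) ℤ) (n : ℕ) : ℤ := pathMat w n 1 1
def te (w : ℕ → Matrix (Fin 2) (Fin 2) ℤ) (n : ℕ) : ℤ := pe w n + se w n
def Ee (w : ℕ → Matrix (Fin 2) (Fin 2) ℤ) (n : ℕ) : ℤ := pe w n + qe w n + re w n + se w n

variable {w : ℕ → Matrix (Fin 2) (Fin 2) ℤ}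

lemma stepL {n : ℕ} (hn : w n = Lm) :
    pe w (n+1) = pe w n ∧ qe w (n+1) = pe w n + qe w n ∧
      re w (n+1) = re w n ∧ se w (n+1) = re w n + se w n := by
  unfold pe qe re se
  rw [pathMat_succ, hn]
  exact ⟨(mul_Lm_apply _).1, (mul_Lm_apply _).2.1, (mul_Lm_apply _).2.2.1,
    (mul_Lm_apply _).2.2.2⟩

lemma stepR {n : ℕ} (hn : w n = Rm) :
    pe w (n+1) = pe w n + qe w n ∧ qe w (n+1) = qe w n ∧
      re w (n+1) = re w n + se w n ∧ se w (n+1) = se w n := by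
  unfold pe qe re se
  rw [pathMat_succ, hn]
  exact ⟨(mul_Rm_apply _).1, (mul_Rm_apply _).2.1, (mul_Rm_apply _).2.2.1,
    (mul_Rm_apply _).2.2.2⟩

lemma step (hw : ∀ n, w n = Lm ∨ w n = Rm) (n : ℕ) :
    (pe w (n+1) = pe w n ∧ qe w (n+1) = pe w n + qe w n ∧
      re w (n+1) = re w n ∧ se w (n+1) = re w n + se w n) ∨
    (pe w (n+1) = pe w n + qe w n ∧ qe w (n+1) = qe w n ∧
      re w (n+1) = re w n + se w n ∧ se w (n+1) = se w n) := by
  rcases hw n with hn | hn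
  · exact Or.inl (stepL hn)
  · exact Or.inr (stepR hn)

lemma inv (hw : ∀ n, w n = Lm ∨ w n = Rm) (n : ℕ) :
    1 ≤ pe w n ∧ 0 ≤ qe w n ∧ 0 ≤ re w n ∧ 1 ≤ se w n ∧
      pe w n * se w n - qe w n * re w n = 1 := by
  induction n with
  | zero =>
      unfold pe qe re se
      rw [pathMat_zero]
      norm_num [Matrix.one_apply]
  | succ n ih =>
      obtain ⟨h1, h2, h3, h4⟩ | ⟨h1, h2, h3, h4⟩ := step hw n <;>
        { rw [h1, h2, h3, h4]
          refine ⟨by linarith [ih.1, ih.2.1], by linarith [ih.1, ih.2.1], by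
            linarith [ih.2.2.1, ih.2.2.2.1], by linarith [ih.2.2.1, ih.2.2.2.1], by
            linear_combination ih.2.2.2.2⟩ }

lemma te_mono (hw : ∀ n, w n = Lm ∨ w n = Rm) : Monotone (te w) := by
  apply monotone_nat_of_le_succ
  intro n
  unfold te
  obtain ⟨h1, h2, h3, h4⟩ | ⟨h1, h2, h3, h4⟩ := step hw n <;>
    { rw [h1, h4]; linarith [(inv hw n).2.1, (inv hw n).2.2.1] }

lemma te_pos (hw : ∀ n, w n = Lm ∨ w n = Rm) (n : ℕ) : 2 ≤ te w n := by
  have := inv hw n; unfold te; linarith [this.1, this.2.2.2.1]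

lemma qr_bound (hw : ∀ n, w n = Lm ∨ w n = Rm) (n : ℕ) :
    qe w n ≤ n * te w n ∧ re w n ≤ n * te w n := by
  induction n with
  | zero =>
      unfold qe re
      rw [pathMat_zero]
      norm_num [Matrix.one_apply]
  | succ n ih =>
      have hmono : te w n ≤ te w (n+1) := te_mono hw (Nat.le_succ n)
      have hinv := inv hw n
      have hps : pe w n ≤ te w n ∧ se w n ≤ te w n := by
        unfold te; constructor <;> linarith [hinv.1, hinv.2.2.2.1]
      have htpos := te_pos hw n
      obtain ⟨h1, h2, h3, h4⟩ | ⟨h1, h2, h3, h4⟩ := step hw n <;>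
        { rw [h2, h3]
          push_cast
          constructor <;> nlinarith [ih.1, ih.2, hps.1, hps.2] }

lemma Ee_le_te (hw : ∀ n, w n = Lm ∨ w n = Rm) (n : ℕ) :
    Ee w n ≤ (2 * n + 2) * te w n := by
  have h := qr_bound hw n
  have hinv := inv hw n
  have htpos := te_pos hw n
  unfold Ee te at *
  nlinarith [h.1, h.2]

lemma Ee_band (hw : ∀ n, w n = Lm ∨ w n = Rm) (n : ℕ) : Ee w n ≤ 2 ^ (n+1) := by
  induction n with
  | zero =>
      unfold Ee pe qe re se
      rw [pathMat_zero]
      norm_num [Matrix.one_apply]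
  | succ n ih =>
      have hinv := inv hw n
      have : Ee w (n+1) ≤ 2 * Ee w n := by
        obtain ⟨h1, h2, h3, h4⟩ | ⟨h1, h2, h3, h4⟩ := step hw n <;>
          { unfold Ee; rw [h1, h2, h3, h4]; unfold Ee at *
            linarith [hinv.1, hinv.2.1, hinv.2.2.1, hinv.2.2.2.1] }
      calc Ee w (n+1) ≤ 2 * Ee w n := this
        _ ≤ 2 * 2 ^ (n+1) := by linarith
        _ = 2 ^ (n+2) := by ring

lemma te_le_Ee (hw : ∀ n, w n = Lm ∨ w n = Rm) (n : ℕ) : te w n ≤ Ee w n := by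
  have hinv := inv hw n
  unfold te Ee
  linarith [hinv.2.1, hinv.2.2.1]

-- discriminant invariance identity
lemma disc_identity (a h b p q r s : ℤ) :
    (Qval a h b (p+q) (r+s) - Qval a h b p r - Qval a h b q s)^2
      - 4 * Qval a h b p r * Qval a h b q s = (h^2 - 4*a*b) * (p*s - q*r)^2 := by
  unfold Qval; ring

-- factorization of forms with square discriminant
lemma exists_factorization (a h b : ℤ) (hD : 0 < h ^ 2 - 4 * a * b)
    (hsq : IsSquare (h ^ 2 - 4 * a * b)) :
    ∃ α β γ δ m : ℤ, m ≠ 0 ∧ α * δ - β * γ ≠ 0 ∧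
      ∀ x y : ℤ, m * Qval a h b x y = (α * x + β * y) * (γ * x + δ * y) := by
  obtain ⟨d, hd⟩ := hsq
  have hd2 : h ^ 2 - 4 * a * b = d ^ 2 := by rw [hd]; ring
  have hdne : d ≠ 0 := by
    rintro rfl; rw [hd2] at hD; norm_num at hD
  by_cases ha : a = 0
  · refine ⟨0, 1, h, b, 1, one_ne_zero, ?_, ?_⟩
    · have : h ≠ 0 := by
        rintro rfl; rw [ha] at hD; norm_num at hD
      simpa using this
    · intro x y; subst ha; unfold Qval; ring
  · refine ⟨2*a, h + d, 2*a, h - d, 4*a, by simpa using ha, ?_, ?_⟩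
    · have : 2*a*(h-d) - (h+d)*(2*a) = -4*a*d := by ring
      rw [this]
      intro hc
      rcases mul_eq_zero.mp hc with hc | hc
      · rcases mul_eq_zero.mp hc with hc | hc
        · norm_num at hc
        · exact ha hc
      · exact hdne hc
    · intro x y
      unfold Qval
      linear_combination (-(y^2) : ℤ) * hd2

/-! ### Linear form dynamics -/

def U1 (al be : ℤ) (w : ℕ → Matrix (Fin 2) (Fin 2) ℤ) (n : ℕ) : ℤ := al * pe w n + be * re w n
def U2 (al be : ℤ) (w : ℕ → Matrix (Fin 2) (Fin 2) ℤ) (n : ℕ) : ℤ := al * qe w n + be * se w n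

lemma UstepL {al be : ℤ} {n : ℕ} (hn : w n = Lm) :
    U1 al be w (n+1) = U1 al be w n ∧ U2 al be w (n+1) = U1 al be w n + U2 al be w n := by
  obtain ⟨h1, h2, h3, h4⟩ := stepL (w := w) hn
  unfold U1 U2
  rw [h1, h2, h3, h4]; constructor <;> ring

lemma UstepR {al be : ℤ} {n : ℕ} (hn : w n = Rm) :
    U1 al be w (n+1) = U1 al be w n + U2 al be w n ∧ U2 al be w (n+1) = U2 al be w n := by
  obtain ⟨h1, h2, h3, h4⟩ := stepR (w := w) hn
  unfold U1 U2
  rw [h1, h2, h3, h4]; constructor <;> ring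

lemma Udet (al be ga de : ℤ) (n : ℕ) :
    U1 al be w n * U2 ga de w n - U2 al be w n * U1 ga de w n
      = (al * de - be * ga) * (pe w n * se w n - qe w n * re w n) := by
  unfold U1 U2; ring

lemma Upos_step (hw : ∀ n, w n = Lm ∨ w n = Rm) {al be : ℤ} {n : ℕ}
    (hp : 0 < U1 al be w n * U2 al be w n) :
    0 < U1 al be w (n+1) * U2 al be w (n+1) := by
  rcases hw n with hn | hn
  · obtain ⟨h1, h2⟩ := UstepL (al := al) (be := be) (w := w) hn
    rw [h1, h2]; nlinarith [sq_nonneg (U1 al be w n)]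
  · obtain ⟨h1, h2⟩ := UstepR (al := al) (be := be) (w := w) hn
    rw [h1, h2]; nlinarith [sq_nonneg (U2 al be w n)]

lemma Upos_persist (hw : ∀ n, w n = Lm ∨ w n = Rm) {al be : ℤ} {n0 : ℕ}
    (hp : 0 < U1 al be w n0 * U2 al be w n0) :
    ∀ n, n0 ≤ n → 0 < U1 al be w n * U2 al be w n := by
  intro n hn
  induction n, hn using Nat.le_induction with
  | base => exact hp
  | succ n hn ih => exact Upos_step hw ih

lemma dec_helper (x y : ℤ) (hx : x ≠ 0) (hxy : x * y ≤ 0) (h2 : x * (x + y) ≤ 0) :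
    |x + y| + |x| ≤ |y| := by
  rcases hx.lt_or_gt with hx' | hx'
  · -- x < 0
    have hy : 0 ≤ y := by nlinarith
    have hs : 0 ≤ x + y := by nlinarith
    rw [abs_of_nonneg hs, abs_of_neg hx', abs_of_nonneg hy]; linarith
  · -- 0 < x
    have hy : y ≤ 0 := by nlinarith
    have hs : x + y ≤ 0 := by nlinarith
    rw [abs_of_nonpos hs, abs_of_pos hx', abs_of_nonpos hy]; linarith

lemma sq_contra {x : ℤ} (hx : x ≠ 0) (hh : x * x ≤ 0) : False := by
  have h0 : x * x = 0 := le_antisymm hh (mul_self_nonneg _)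
  exact hx (by simpa using mul_self_eq_zero.mp h0)

lemma Udec (hw : ∀ n, w n = Lm ∨ w n = Rm) {al be : ℤ} {n : ℕ}
    (hns' : U1 al be w (n+1) * U2 al be w (n+1) ≤ 0)
    (h1 : U1 al be w n ≠ 0) (h2 : U2 al be w n ≠ 0)
    (hns : U1 al be w n * U2 al be w n ≤ 0) :
    |U1 al be w (n+1)| + |U2 al be w (n+1)| + 1 ≤ |U1 al be w n| + |U2 al be w n| := by
  rcases hw n with hn | hn
  · obtain ⟨e1, e2⟩ := UstepL (al := al) (be := be) (w := w) hn
    rw [e1, e2] at hns' ⊢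
    have hd := dec_helper (U1 al be w n) (U2 al be w n) h1 hns hns'
    have h1' : 1 ≤ |U1 al be w n| := Int.one_le_abs h1
    linarith
  · obtain ⟨e1, e2⟩ := UstepR (al := al) (be := be) (w := w) hn
    rw [e1, e2] at hns' ⊢
    have hns2 : U2 al be w n * U1 al be w n ≤ 0 := by linarith [mul_comm (U1 al be w n) (U2 al be w n)]
    have hns2' : U2 al be w n * (U2 al be w n + U1 al be w n) ≤ 0 := by
      nlinarith [hns']
    have hd := dec_helper (U2 al be w n) (U1 al be w n) h2 hns2 hns2'
    have h2' : 1 ≤ |U2 al be w n| := Int.one_le_abs h2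
    have e3 : U2 al be w n + U1 al be w n = U1 al be w n + U2 al be w n := by ring
    rw [e3] at hd
    linarith

lemma Uzero (hw : ∀ n, w n = Lm ∨ w n = Rm) {al be : ℤ}
    (hns : ∀ n, U1 al be w n * U2 al be w n ≤ 0) :
    ∃ n, U1 al be w n = 0 ∨ U2 al be w n = 0 := by
  by_contra hc
  push_neg at hc
  have hdec : ∀ n, |U1 al be w n| + |U2 al be w n| + (n : ℤ)
      ≤ |U1 al be w 0| + |U2 al be w 0| := by
    intro n
    induction n with
    | zero => simp
    | succ n ih =>
        have := Udec hw (hns (n+1)) (hc n).1 (hc n).2 (hns n)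
        push_cast
        push_cast at ih
        linarith
  have hn := hdec (|U1 al be w 0| + |U2 al be w 0|).toNat
  have h0 : (0 : ℤ) ≤ |U1 al be w 0| + |U2 al be w 0| := by positivity
  have g1 := Int.one_le_abs (hc ((|U1 al be w 0| + |U2 al be w 0|).toNat)).1
  have g2 := Int.one_le_abs (hc ((|U1 al be w 0| + |U2 al be w 0|).toNat)).2
  rw [Int.toNat_of_nonneg h0] at hn
  linarith

lemma UconstL (hw : ∀ n, w n = Lm ∨ w n = Rm) {al be : ℤ}
    (hns : ∀ n, U1 al be w n * U2 al be w n ≤ 0)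
    (hne : ∀ n, ¬(U1 al be w n = 0 ∧ U2 al be w n = 0))
    {n1 : ℕ} (hz : U1 al be w n1 = 0) :
    ∀ n, n1 ≤ n → w n = Lm := by
  have key : ∀ n, n1 ≤ n → U1 al be w n = 0 ∧ w n = Lm := by
    intro n hn
    induction n, hn using Nat.le_induction with
    | base =>
        refine ⟨hz, ?_⟩
        rcases hw n1 with hn | hn
        · exact hn
        · exfalso
          obtain ⟨e1, e2⟩ := UstepR (al := al) (be := be) (w := w) hn
          have h2 : U2 al be w n1 ≠ 0 := fun hh => hne n1 ⟨hz, hh⟩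
          have := hns (n1 + 1)
          rw [e1, e2, hz] at this
          simp at this
          exact sq_contra h2 this
    | succ n hn ih =>
        obtain ⟨e1, e2⟩ := UstepL (al := al) (be := be) (w := w) ih.2
        have hz' : U1 al be w (n+1) = 0 := by rw [e1, ih.1]
        refine ⟨hz', ?_⟩
        rcases hw (n+1) with hh | hh
        · exact hh
        · exfalso
          obtain ⟨f1, f2⟩ := UstepR (al := al) (be := be) (w := w) hh
          have h2 : U2 al be w (n+1) ≠ 0 := fun h2 => hne (n+1) ⟨hz', h2⟩
          have := hns (n + 2)
          rw [f1, f2, hz'] at this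
          simp at this
          exact sq_contra h2 this
  intro n hn; exact (key n hn).2

lemma UconstR (hw : ∀ n, w n = Lm ∨ w n = Rm) {al be : ℤ}
    (hns : ∀ n, U1 al be w n * U2 al be w n ≤ 0)
    (hne : ∀ n, ¬(U1 al be w n = 0 ∧ U2 al be w n = 0))
    {n1 : ℕ} (hz : U2 al be w n1 = 0) :
    ∀ n, n1 ≤ n → w n = Rm := by
  have key : ∀ n, n1 ≤ n → U2 al be w n = 0 ∧ w n = Rm := by
    intro n hn
    induction n, hn using Nat.le_induction with
    | base =>
        refine ⟨hz, ?_⟩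
        rcases hw n1 with hn | hn
        · exfalso
          obtain ⟨e1, e2⟩ := UstepL (al := al) (be := be) (w := w) hn
          have h1 : U1 al be w n1 ≠ 0 := fun hh => hne n1 ⟨hh, hz⟩
          have := hns (n1 + 1)
          rw [e1, e2, hz] at this
          simp at this
          exact sq_contra h1 this
        · exact hn
    | succ n hn ih =>
        obtain ⟨e1, e2⟩ := UstepR (al := al) (be := be) (w := w) ih.2
        have hz' : U2 al be w (n+1) = 0 := by rw [e2, ih.1]
        refine ⟨hz', ?_⟩
        rcases hw (n+1) with hh | hh
        · exfalso
          obtain ⟨f1, f2⟩ := UstepL (al := al) (be := be) (w := w) hh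
          have h1 : U1 al be w (n+1) ≠ 0 := fun h1 => hne (n+1) ⟨h1, hz'⟩
          have := hns (n + 2)
          rw [f1, f2, hz'] at this
          simp at this
          exact sq_contra h1 this
        · exact hh
  intro n hn; exact (key n hn).2

lemma same_sign_abs_add {x y : ℤ} (hxy : 0 < x * y) : |x + y| = |x| + |y| := by
  rcases lt_trichotomy x 0 with hx | hx | hx
  · have hy : y < 0 := by nlinarith
    rw [abs_of_neg hx, abs_of_neg hy, abs_of_neg (by linarith : x + y < 0)]; ring
  · simp [hx] at hxy
  · have hy : 0 < y := by nlinarith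
    rw [abs_of_pos hx, abs_of_pos hy, abs_of_pos (by linarith : 0 < x + y)]

lemma Ugrowth (hw : ∀ n, w n = Lm ∨ w n = Rm) {al be : ℤ} {n0 : ℕ}
    (hp : 0 < U1 al be w n0 * U2 al be w n0) :
    ∀ n, n0 ≤ n →
      pe w n + re w n ≤ Ee w n0 * |U1 al be w n| ∧
      qe w n + se w n ≤ Ee w n0 * |U2 al be w n| := by
  intro n hn
  induction n, hn using Nat.le_induction with
  | base =>
      have h1 : 1 ≤ |U1 al be w n0| := by
        refine Int.one_le_abs ?_
        intro hh; rw [hh] at hp; simp at hp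
      have h2 : 1 ≤ |U2 al be w n0| := by
        refine Int.one_le_abs ?_
        intro hh; rw [hh] at hp; simp at hp
      have hinv := inv hw n0
      have hE : 0 ≤ Ee w n0 := by unfold Ee; linarith [hinv.1, hinv.2.1, hinv.2.2.1, hinv.2.2.2.1]
      constructor
      · calc pe w n0 + re w n0 ≤ Ee w n0 := by
              unfold Ee; linarith [hinv.2.1, hinv.2.2.2.1]
          _ = Ee w n0 * 1 := by ring
          _ ≤ Ee w n0 * |U1 al be w n0| := by
              exact mul_le_mul_of_nonneg_left h1 hE
      · calc qe w n0 + se w n0 ≤ Ee w n0 := by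
              unfold Ee; linarith [hinv.1, hinv.2.2.1]
          _ = Ee w n0 * 1 := by ring
          _ ≤ Ee w n0 * |U2 al be w n0| := by
              exact mul_le_mul_of_nonneg_left h2 hE
  | succ n hn ih =>
      have hpn : 0 < U1 al be w n * U2 al be w n := Upos_persist hw hp n hn
      rcases hw n with hh | hh
      · obtain ⟨e1, e2⟩ := UstepL (al := al) (be := be) (w := w) hh
        obtain ⟨f1, f2, f3, f4⟩ := stepL (w := w) hh
        rw [e1, e2, f1, f2, f3, f4]
        refine ⟨ih.1, ?_⟩
        rw [same_sign_abs_add hpn]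
        have : (pe w n + qe w n) + (re w n + se w n)
            = (pe w n + re w n) + (qe w n + se w n) := by ring
        rw [this, mul_add]
        exact add_le_add ih.1 ih.2
      · obtain ⟨e1, e2⟩ := UstepR (al := al) (be := be) (w := w) hh
        obtain ⟨f1, f2, f3, f4⟩ := stepR (w := w) hh
        rw [e1, e2, f1, f2, f3, f4]
        refine ⟨?_, ih.2⟩
        rw [same_sign_abs_add hpn]
        have : (pe w n + qe w n) + (re w n + se w n)
            = (pe w n + re w n) + (qe w n + se w n) := by ring
        rw [this, mul_add]
        exact add_le_add ih.1 ih.2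



lemma mem_spectrum_fin_two (M : Matrix (Fin 2) (Fin 2) ℂ) (μ : ℂ) :
    μ ∈ spectrum ℂ M ↔ (μ - M 0 0) * (μ - M 1 1) - M 0 1 * M 1 0 = 0 := by
  have hdet : (algebraMap ℂ (Matrix (Fin 2) (Fin 2) ℂ) μ - M).det
      = (μ - M 0 0) * (μ - M 1 1) - M 0 1 * M 1 0 := by
    rw [Matrix.det_fin_two]
    simp [Matrix.algebraMap_matrix_apply]
  rw [spectrum.mem_iff, Matrix.isUnit_iff_isUnit_det, hdet, isUnit_iff_ne_zero, not_not]

lemma spectralRadius_le_of_forall (M : Matrix (Fin 2) (Fin 2) ℂ) (c : ℝ)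
    (hall : ∀ μ ∈ spectrum ℂ M, ‖μ‖ ≤ c) :
    spectralRadius ℂ M ≤ ENNReal.ofReal c := by
  rw [spectralRadius]
  refine iSup₂_le fun μ hμ => ?_
  rw [show ((‖μ‖₊ : ℝ≥0∞)) = ENNReal.ofReal ‖μ‖ from (ofReal_norm μ).symm]
  exact ENNReal.ofReal_le_ofReal (hall μ hμ)

lemma le_spectralRadius_of_mem (M : Matrix (Fin 2) (Fin 2) ℂ) (μ : ℂ) (hμ : μ ∈ spectrum ℂ M) :
    ENNReal.ofReal ‖μ‖ ≤ spectralRadius ℂ M := by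
  rw [show ENNReal.ofReal ‖μ‖ = ((‖μ‖₊ : ℝ≥0∞)) from ofReal_norm μ, spectralRadius]
  exact le_iSup₂ (f := fun k (_ : k ∈ spectrum ℂ M) => ((‖k‖₊ : ℝ≥0∞))) μ hμ

lemma rho_toReal_bounds (M : Matrix (Fin 2) (Fin 2) ℂ) (t : ℝ) (ht : 2 ≤ t)
    (hM00 : M 0 0 + M 1 1 = (t : ℂ))
    (hdet : M 0 0 * M 1 1 - M 0 1 * M 1 0 = 1) :
    t / 2 ≤ (spectralRadius ℂ M).toReal ∧ (spectralRadius ℂ M).toReal ≤ 2 * t := by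
  have hroot : ∀ μ : ℂ, (μ ∈ spectrum ℂ M ↔ μ ^ 2 - t * μ + 1 = 0) := by
    intro μ
    rw [mem_spectrum_fin_two]
    constructor <;> intro hh
    · linear_combination hh + μ * hM00 - hdet
    · linear_combination hh - μ * hM00 + hdet
  set lam : ℝ := (t + Real.sqrt (t ^ 2 - 4)) / 2 with hlam
  have hs4 : (0:ℝ) ≤ t ^ 2 - 4 := by nlinarith
  have hsq : Real.sqrt (t ^ 2 - 4) ^ 2 = t ^ 2 - 4 := Real.sq_sqrt hs4
  have hlroot : lam ^ 2 - t * lam + 1 = 0 := by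
    rw [hlam]; linear_combination (1/4 : ℝ) * hsq
  have hlmem : (lam : ℂ) ∈ spectrum ℂ M := by
    rw [hroot]
    exact_mod_cast congrArg (fun x : ℝ => (x : ℂ)) hlroot
  have hl2 : t / 2 ≤ lam := by
    have := Real.sqrt_nonneg (t ^ 2 - 4)
    rw [hlam]; linarith
  have hub : ∀ μ ∈ spectrum ℂ M, ‖μ‖ ≤ t + 1 := by
    intro μ hμ
    rw [hroot] at hμ
    have heq : μ ^ 2 = t * μ - 1 := by linear_combination hμ
    by_contra hcon
    push_neg at hcon
    have h1 : ‖μ‖ ^ 2 = ‖μ ^ 2‖ := by rw [norm_pow]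
    have h2 : ‖μ ^ 2‖ ≤ t * ‖μ‖ + 1 := by
      rw [heq]
      calc ‖(t:ℂ) * μ - 1‖ ≤ ‖(t:ℂ) * μ‖ + ‖(1:ℂ)‖ := norm_sub_le _ _
        _ = t * ‖μ‖ + 1 := by
            rw [norm_mul, norm_one, Complex.norm_real, Real.norm_eq_abs,
              abs_of_nonneg (by linarith : (0:ℝ) ≤ t)]
    nlinarith [norm_nonneg μ]
  have hρub : spectralRadius ℂ M ≤ ENNReal.ofReal (t + 1) :=
    spectralRadius_le_of_forall M (t + 1) hub
  have hne : spectralRadius ℂ M ≠ ⊤ :=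
    ne_top_of_le_ne_top ENNReal.ofReal_ne_top hρub
  have hub' : (spectralRadius ℂ M).toReal ≤ t + 1 := by
    have := ENNReal.toReal_mono ENNReal.ofReal_ne_top hρub
    rwa [ENNReal.toReal_ofReal (by linarith)] at this
  have hlb : t / 2 ≤ (spectralRadius ℂ M).toReal := by
    have h1 : ENNReal.ofReal ‖(lam : ℂ)‖ ≤ spectralRadius ℂ M := le_spectralRadius_of_mem M _ hlmem
    have h2 := ENNReal.toReal_mono hne h1
    rw [ENNReal.toReal_ofReal (norm_nonneg _)] at h2
    have h3 : ‖(lam:ℂ)‖ = lam := by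
      rw [Complex.norm_real, Real.norm_eq_abs, abs_of_nonneg (by linarith)]
    rw [h3] at h2
    linarith
  exact ⟨hlb, by linarith⟩


lemma limsup_le_of_diff' {f g : ℕ → ℝ} {B : ℝ}
    (hf : ∀ᶠ n in atTop, |f n| ≤ B) (hg : ∀ᶠ n in atTop, |g n| ≤ B)
    (hd : ∀ ε : ℝ, 0 < ε → ∀ᶠ n in atTop, f n ≤ g n + ε) :
    limsup f atTop ≤ limsup g atTop := by
  refine le_of_forall_pos_le_add fun ε hε => ?_
  have hcf : IsCoboundedUnder (· ≤ ·) atTop f :=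
    isCoboundedUnder_le_of_eventually_le atTop (x := -B)
      (hf.mono fun n hn => by linarith [neg_abs_le (f n)])
  have hbg : IsBoundedUnder (· ≤ ·) atTop g :=
    isBoundedUnder_of_eventually_le (a := B) (hg.mono fun n hn => le_of_abs_le hn)
  have hcg : IsCoboundedUnder (· ≤ ·) atTop g :=
    isCoboundedUnder_le_of_eventually_le atTop (x := -B)
      (hg.mono fun n hn => by linarith [neg_abs_le (g n)])
  have hbge : IsBoundedUnder (· ≤ ·) atTop (fun n => g n + ε) := by
    obtain ⟨c, hc⟩ := hbg
    exact ⟨c + ε, by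
      rw [eventually_map] at hc ⊢
      exact hc.mono fun n hn => by simpa using add_le_add_right hn ε⟩
  have h1 : limsup f atTop ≤ limsup (fun n => g n + ε) atTop :=
    limsup_le_limsup (hd ε hε) hcf hbge
  have hmono : Monotone (fun x : ℝ => x + ε) := fun x y hxy => by dsimp; linarith
  have h2 := hmono.map_limsup_of_continuousAt (F := atTop) g
    (continuous_id.add continuous_const).continuousAt hbg hcg
  simp only [Function.comp_def] at h2
  rw [← h2] at h1
  exact h1

lemma limsup_eq_of_diff {f g : ℕ → ℝ} {B : ℝ}
    (hf : ∀ᶠ n in atTop, |f n| ≤ B) (hg : ∀ᶠ n in atTop, |g n| ≤ B)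
    (hd : Filter.Tendsto (fun n => f n - g n) atTop (nhds 0)) :
    limsup f atTop = limsup g atTop := by
  have key : ∀ ε : ℝ, 0 < ε → (∀ᶠ n in atTop, f n ≤ g n + ε) ∧ (∀ᶠ n in atTop, g n ≤ f n + ε) := by
    intro ε hε
    have := hd.eventually (eventually_abs_sub_lt 0 hε)
    constructor <;>
      · refine this.mono fun n hn => ?_
        simp only [sub_zero] at hn
        rw [abs_lt] at hn
        simp only [sub_lt_iff_lt_add, neg_lt_sub_iff_lt_add] at hn
        linarith [hn.1, hn.2]
  exact le_antisymm
    (limsup_le_of_diff' hf hg fun ε hε => (key ε hε).1)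
    (limsup_le_of_diff' hg hf fun ε hε => (key ε hε).2)

lemma limsup_two_mul {f : ℕ → ℝ} {B : ℝ} (hf : ∀ᶠ n in atTop, |f n| ≤ B) :
    limsup (fun n => 2 * f n) atTop = 2 * limsup f atTop := by
  have hbf : IsBoundedUnder (· ≤ ·) atTop f :=
    isBoundedUnder_of_eventually_le (a := B) (hf.mono fun n hn => le_of_abs_le hn)
  have hcf : IsCoboundedUnder (· ≤ ·) atTop f :=
    isCoboundedUnder_le_of_eventually_le atTop (x := -B)
      (hf.mono fun n hn => by linarith [neg_abs_le (f n)])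
  have hmono : Monotone (fun x : ℝ => 2 * x) := fun x y hxy => by dsimp; linarith
  have h2 := hmono.map_limsup_of_continuousAt (F := atTop) f
    (continuous_const.mul continuous_id).continuousAt hbf hcf
  simp only [Function.comp_def] at h2
  rw [← h2]

lemma tendsto_log_succ_div : Tendsto (fun n : ℕ => Real.log ((n : ℝ) + 1) / n) atTop (nhds 0) := by
  have h0 : Tendsto (fun x : ℝ => Real.log x / x) atTop (nhds 0) :=
    Real.isLittleO_log_id_atTop.tendsto_div_nhds_zero
  have hcomp : Tendsto (fun n : ℕ => ((n : ℝ) + 1)) atTop atTop :=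
    tendsto_atTop_add_const_right atTop 1 tendsto_natCast_atTop_atTop
  have h1 : Tendsto (fun n : ℕ => Real.log ((n:ℝ)+1) / ((n:ℝ)+1)) atTop (nhds 0) :=
    h0.comp hcomp
  have h2 : Tendsto (fun n : ℕ => 2 * (Real.log ((n:ℝ)+1) / ((n:ℝ)+1))) atTop (nhds 0) := by
    simpa using h1.const_mul 2
  refine tendsto_of_tendsto_of_tendsto_of_le_of_le' tendsto_const_nhds h2 ?_ ?_
  · filter_upwards [eventually_ge_atTop 1] with n hn
    have h3 : (0:ℝ) ≤ Real.log ((n:ℝ)+1) := Real.log_nonneg (by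
      have : (1:ℝ) ≤ (n:ℝ) := by exact_mod_cast hn
      linarith)
    have h4 : (0:ℝ) ≤ (n:ℝ) := by positivity
    exact div_nonneg h3 h4
  · filter_upwards [eventually_ge_atTop 1] with n hn
    have hn' : (1:ℝ) ≤ (n:ℝ) := by exact_mod_cast hn
    have hlog : 0 ≤ Real.log ((n:ℝ)+1) := Real.log_nonneg (by linarith)
    have h : (1:ℝ)/n ≤ 2/((n:ℝ)+1) := by
      rw [div_le_div_iff₀ (by linarith) (by linarith)]
      linarith
    calc Real.log ((n:ℝ)+1) / n = Real.log ((n:ℝ)+1) * (1/(n:ℝ)) := by ring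
      _ ≤ Real.log ((n:ℝ)+1) * (2/((n:ℝ)+1)) := mul_le_mul_of_nonneg_left h hlog
      _ = 2 * (Real.log ((n:ℝ)+1)/((n:ℝ)+1)) := by ring

lemma log_div_tendsto_zero (X : ℕ → ℝ) (C : ℝ) (k : ℕ)
    (h1 : ∀ᶠ n in atTop, 1 ≤ X n) (h2 : ∀ᶠ n in atTop, X n ≤ C * ((n:ℝ)+1) ^ k) :
    Tendsto (fun n => Real.log (X n) / n) atTop (nhds 0) := by
  set C' : ℝ := max C 1 with hC'
  have hC1 : (1:ℝ) ≤ C' := le_max_right _ _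
  have hub : Tendsto (fun n : ℕ => (Real.log C' + k * Real.log ((n:ℝ)+1)) / n) atTop (nhds 0) := by
    have ha : Tendsto (fun n : ℕ => Real.log C' / n) atTop (nhds 0) :=
      tendsto_const_nhds.div_atTop tendsto_natCast_atTop_atTop
    have hb := tendsto_log_succ_div.const_mul (k : ℝ)
    have hc := ha.add hb
    simp only [mul_zero, add_zero, zero_add] at hc
    refine hc.congr fun n => ?_
    ring
  refine tendsto_of_tendsto_of_tendsto_of_le_of_le' tendsto_const_nhds hub ?_ ?_
  · filter_upwards [h1, eventually_ge_atTop 1] with n hn hn1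
    have h3 : 0 ≤ Real.log (X n) := Real.log_nonneg hn
    have h4 : (0:ℝ) ≤ (n:ℝ) := by positivity
    exact div_nonneg h3 h4
  · filter_upwards [h1, h2, eventually_ge_atTop 1] with n hn hn2 hn1
    have hnpos : (0:ℝ) < (n:ℝ) := by exact_mod_cast hn1
    have hXpos : (0:ℝ) < X n := by linarith
    have hCn : X n ≤ C' * ((n:ℝ)+1)^k := by
      calc X n ≤ C * ((n:ℝ)+1)^k := hn2
        _ ≤ C' * ((n:ℝ)+1)^k := by
            apply mul_le_mul_of_nonneg_right (le_max_left _ _) (by positivity)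
    have hlog : Real.log (X n) ≤ Real.log C' + k * Real.log ((n:ℝ)+1) := by
      calc Real.log (X n) ≤ Real.log (C' * ((n:ℝ)+1)^k) :=
            Real.log_le_log hXpos hCn
        _ = Real.log C' + k * Real.log ((n:ℝ)+1) := by
            rw [Real.log_mul (by positivity) (by positivity), Real.log_pow]
    exact div_le_div_of_nonneg_right hlog hnpos.le |>.trans (le_of_eq rfl)

/-! ### Bounds on the form values -/

variable {w : ℕ → Matrix (Fin 2) (Fin 2) ℤ}

lemma Qnorm_eq' (a h b : ℤ) (n : ℕ) :
    Qnorm a h b w n = max |Qval a h b (pe w n) (re w n)|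
      (max |Qval a h b (qe w n) (se w n)|
        |Qval a h b (pe w n + qe w n) (re w n + se w n)|) := rfl

lemma Qnorm_nonneg (a h b : ℤ) (n : ℕ) : 0 ≤ Qnorm a h b w n :=
  le_trans (abs_nonneg _) (le_max_left _ _)

lemma Qnorm_pos (a h b : ℤ) (hD : h ^ 2 - 4 * a * b ≠ 0)
    (hw : ∀ n, w n = Lm ∨ w n = Rm) (n : ℕ) : 1 ≤ Qnorm a h b w n := by
  rcases (lt_or_ge (Qnorm a h b w n) 1) with hc | hc
  · exfalso
    have h0 : Qnorm a h b w n = 0 := le_antisymm (by omega) (Qnorm_nonneg a h b n)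
    rw [Qnorm_eq'] at h0
    have e1 : Qval a h b (pe w n) (re w n) = 0 := by
      have := le_max_left |Qval a h b (pe w n) (re w n)|
        (max |Qval a h b (qe w n) (se w n)|
          |Qval a h b (pe w n + qe w n) (re w n + se w n)|)
      rw [h0] at this
      exact abs_eq_zero.mp (le_antisymm this (abs_nonneg _))
    have e2 : Qval a h b (qe w n) (se w n) = 0 := by
      have := le_trans (le_max_left |Qval a h b (qe w n) (se w n)|
        |Qval a h b (pe w n + qe w n) (re w n + se w n)|)
        (le_max_right |Qval a h b (pe w n) (re w n)| _)
      rw [h0] at this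
      exact abs_eq_zero.mp (le_antisymm this (abs_nonneg _))
    have e3 : Qval a h b (pe w n + qe w n) (re w n + se w n) = 0 := by
      have := le_trans (le_max_right |Qval a h b (qe w n) (se w n)|
        |Qval a h b (pe w n + qe w n) (re w n + se w n)|)
        (le_max_right |Qval a h b (pe w n) (re w n)| _)
      rw [h0] at this
      exact abs_eq_zero.mp (le_antisymm this (abs_nonneg _))
    have hid := disc_identity a h b (pe w n) (qe w n) (re w n) (se w n)
    rw [e1, e2, e3, (inv hw n).2.2.2.2] at hid
    simp at hid
    exact hD hid.symm
  · exact hc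

lemma Qval_bound (a h b x y m : ℤ) (hx : |x| ≤ m) (hy : |y| ≤ m) :
    |Qval a h b x y| ≤ (|a| + |h| + |b|) * m ^ 2 := by
  have hm : 0 ≤ m := le_trans (abs_nonneg x) hx
  have h1 : |Qval a h b x y| ≤ |a * x ^ 2| + |h * x * y| + |b * y ^ 2| := by
    unfold Qval
    exact (abs_add_le _ _).trans (add_le_add (abs_add_le _ _) le_rfl)
  have h2 : |a * x ^ 2| = |a| * |x| ^ 2 := by rw [abs_mul, abs_pow]
  have h3 : |h * x * y| = |h| * |x| * |y| := by rw [abs_mul, abs_mul]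
  have h4 : |b * y ^ 2| = |b| * |y| ^ 2 := by rw [abs_mul, abs_pow]
  rw [h2, h3, h4] at h1
  nlinarith [mul_le_mul hx hx (abs_nonneg x) hm, mul_le_mul hx hy (abs_nonneg y) hm,
    mul_le_mul hy hy (abs_nonneg y) hm, abs_nonneg a, abs_nonneg h, abs_nonneg b, abs_nonneg x,
    abs_nonneg y]

lemma Qnorm_upper (a h b : ℤ) (hw : ∀ n, w n = Lm ∨ w n = Rm) (n : ℕ) :
    Qnorm a h b w n ≤ (|a| + |h| + |b|) * (2 * Ee w n) ^ 2 := by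
  obtain ⟨i1, i2, i3, i4, _⟩ := inv hw n
  have hE : pe w n + qe w n + re w n + se w n = Ee w n := rfl
  have b1 : |pe w n| ≤ 2 * Ee w n := by rw [abs_of_pos (by linarith)]; linarith
  have b2 : |qe w n| ≤ 2 * Ee w n := by rw [abs_of_nonneg i2]; linarith
  have b3 : |re w n| ≤ 2 * Ee w n := by rw [abs_of_nonneg i3]; linarith
  have b4 : |se w n| ≤ 2 * Ee w n := by rw [abs_of_pos (by linarith)]; linarith
  have b5 : |pe w n + qe w n| ≤ 2 * Ee w n := by
    rw [abs_of_pos (by linarith)]; linarith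
  have b6 : |re w n + se w n| ≤ 2 * Ee w n := by
    rw [abs_of_pos (by linarith)]; linarith
  rw [Qnorm_eq']
  exact max_le (Qval_bound a h b _ _ _ b1 b3)
    (max_le (Qval_bound a h b _ _ _ b2 b4) (Qval_bound a h b _ _ _ b5 b6))

/-! ### The degenerate (eventually constant word) case -/

lemma Ee_mono (hw : ∀ n, w n = Lm ∨ w n = Rm) : Monotone (Ee w) := by
  apply monotone_nat_of_le_succ
  intro n
  obtain ⟨i1, i2, i3, i4, _⟩ := inv hw n
  obtain ⟨h1, h2, h3, h4⟩ | ⟨h1, h2, h3, h4⟩ := step hw n <;>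
    { unfold Ee; rw [h1, h2, h3, h4]; linarith }

lemma Ee_linear (hw : ∀ n, w n = Lm ∨ w n = Rm) {n1 : ℕ}
    (hcon : (∀ n, n1 ≤ n → w n = Lm) ∨ (∀ n, n1 ≤ n → w n = Rm)) :
    ∀ n, Ee w n ≤ Ee w n1 * ((n : ℤ) + 1) := by
  have hEpos : ∀ k, 0 < Ee w k := by
    intro k
    obtain ⟨i1, i2, i3, i4, _⟩ := inv hw k
    unfold Ee; linarith
  -- step bound for n ≥ n1
  have hstep : ∀ n, n1 ≤ n → Ee w (n+1) ≤ Ee w n + Ee w n1 := by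
    rcases hcon with hL | hR
    · -- all L: pe, re constant
      have hconst : ∀ n, n1 ≤ n → pe w n = pe w n1 ∧ re w n = re w n1 := by
        intro n hn
        induction n, hn using Nat.le_induction with
        | base => exact ⟨rfl, rfl⟩
        | succ n hn ih =>
            obtain ⟨h1, _, h3, _⟩ := stepL (w := w) (hL n hn)
            rw [h1, h3]; exact ih
      intro n hn
      obtain ⟨h1, h2, h3, h4⟩ := stepL (w := w) (hL n hn)
      have hc := hconst n hn
      obtain ⟨i1, i2, i3, i4, _⟩ := inv hw n1
      unfold Ee
      rw [h1, h2, h3, h4, hc.1, hc.2]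
      linarith
    · -- all R: qe, se constant
      have hconst : ∀ n, n1 ≤ n → qe w n = qe w n1 ∧ se w n = se w n1 := by
        intro n hn
        induction n, hn using Nat.le_induction with
        | base => exact ⟨rfl, rfl⟩
        | succ n hn ih =>
            obtain ⟨_, h2, _, h4⟩ := stepR (w := w) (hR n hn)
            rw [h2, h4]; exact ih
      intro n hn
      obtain ⟨h1, h2, h3, h4⟩ := stepR (w := w) (hR n hn)
      have hc := hconst n hn
      obtain ⟨i1, i2, i3, i4, _⟩ := inv hw n1
      unfold Ee
      rw [h1, h2, h3, h4, hc.1, hc.2]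
      linarith
  intro n
  rcases le_or_gt n n1 with hn | hn
  · calc Ee w n ≤ Ee w n1 := Ee_mono hw hn
      _ = Ee w n1 * 1 := by ring
      _ ≤ Ee w n1 * ((n : ℤ) + 1) := by
          have h1n : (1 : ℤ) ≤ (n : ℤ) + 1 := by omega
          nlinarith [hEpos n1]
  · -- n ≥ n1: induction
    have key : ∀ k, Ee w (n1 + k) ≤ Ee w n1 * ((k : ℤ) + 1) := by
      intro k
      induction k with
      | zero => simp
      | succ k ih =>
          have h1 := hstep (n1 + k) (Nat.le_add_right _ _)
          have : (n1 + (k+1)) = (n1 + k) + 1 := by ring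
          rw [this]
          push_cast
          push_cast at ih
          linarith
    have hn' : n1 ≤ n := le_of_lt hn
    obtain ⟨k, rfl⟩ := Nat.exists_eq_add_of_le hn'
    calc Ee w (n1 + k) ≤ Ee w n1 * ((k : ℤ) + 1) := key k
      _ ≤ Ee w n1 * ((n1 + k : ℕ) + 1) := by
          have := hEpos n1
          have hk : ((k : ℤ) + 1) ≤ ((n1 + k : ℕ) : ℤ) + 1 := by push_cast; linarith [Int.ofNat_nonneg n1]
          nlinarith

/-! ### Case lemmas -/

lemma Ee_pos (hw : ∀ n, w n = Lm ∨ w n = Rm) (n : ℕ) : 2 ≤ Ee w n := by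
  obtain ⟨i1, i2, i3, i4, _⟩ := inv hw n
  unfold Ee; linarith

lemma degenerate_word (hw : ∀ n, w n = Lm ∨ w n = Rm) {x1 x2 y1 y2 : ℤ}
    (hDel : x1 * y2 - x2 * y1 ≠ 0)
    (hns : ∀ n, U1 x1 x2 w n * U2 x1 x2 w n ≤ 0) :
    ∃ n1, (∀ n, n1 ≤ n → w n = Lm) ∨ (∀ n, n1 ≤ n → w n = Rm) := by
  have hne : ∀ n, ¬(U1 x1 x2 w n = 0 ∧ U2 x1 x2 w n = 0) := by
    rintro n ⟨h1, h2⟩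
    have hu := Udet (w := w) x1 x2 y1 y2 n
    rw [h1, h2, (inv hw n).2.2.2.2] at hu
    simp at hu
    exact hDel hu.symm
  obtain ⟨n1, hz⟩ := Uzero hw hns
  rcases hz with hz | hz
  · exact ⟨n1, Or.inl (UconstL hw hns hne hz)⟩
  · exact ⟨n1, Or.inr (UconstR hw hns hne hz)⟩

lemma caseB_lower (hw : ∀ n, w n = Lm ∨ w n = Rm) {al be ga de m a h b : ℤ}
    (hfact : ∀ x y, m * Qval a h b x y = (al * x + be * y) * (ga * x + de * y))
    {n0 : ℕ} (hp1 : 0 < U1 al be w n0 * U2 al be w n0)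
    (hp2 : 0 < U1 ga de w n0 * U2 ga de w n0) :
    ∀ n, n0 ≤ n → te w n ^ 2 ≤ (4 * Ee w n0 ^ 2 * |m|) * Qnorm a h b w n := by
  intro n hn
  obtain ⟨g11, g12⟩ := Ugrowth hw hp1 n hn
  obtain ⟨g21, g22⟩ := Ugrowth hw hp2 n hn
  obtain ⟨i1, i2, i3, i4, _⟩ := inv hw n
  have hK : 0 < Ee w n0 := lt_of_lt_of_le (by norm_num) (Ee_pos hw n0)
  set K := Ee w n0 with hKdef
  set S1 := pe w n + re w n with hS1
  set S2 := qe w n + se w n with hS2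
  have hs1 : 0 < S1 := by rw [hS1]; linarith
  have hs2 : 0 < S2 := by rw [hS2]; linarith
  have hte : 0 < te w n := by unfold te; linarith
  have hteS : te w n ≤ S1 + S2 := by unfold te; rw [hS1, hS2]; linarith
  -- value on first column
  have e1 : |m| * |Qval a h b (pe w n) (re w n)| = |U1 al be w n| * |U1 ga de w n| := by
    rw [← abs_mul, hfact]
    unfold U1
    rw [abs_mul]
  have e2 : |m| * |Qval a h b (qe w n) (se w n)| = |U2 al be w n| * |U2 ga de w n| := by
    rw [← abs_mul, hfact]
    unfold U2
    rw [abs_mul]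
  have q1 : S1 * S1 ≤ K ^ 2 * (|m| * |Qval a h b (pe w n) (re w n)|) := by
    rw [e1]
    calc S1 * S1 ≤ (K * |U1 al be w n|) * (K * |U1 ga de w n|) :=
          mul_le_mul g11 g21 hs1.le (by positivity)
      _ = K ^ 2 * (|U1 al be w n| * |U1 ga de w n|) := by ring
  have q2 : S2 * S2 ≤ K ^ 2 * (|m| * |Qval a h b (qe w n) (se w n)|) := by
    rw [e2]
    calc S2 * S2 ≤ (K * |U2 al be w n|) * (K * |U2 ga de w n|) :=
          mul_le_mul g12 g22 hs2.le (by positivity)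
      _ = K ^ 2 * (|U2 al be w n| * |U2 ga de w n|) := by ring
  have hq1 : |Qval a h b (pe w n) (re w n)| ≤ Qnorm a h b w n := by
    rw [Qnorm_eq']; exact le_max_left _ _
  have hq2 : |Qval a h b (qe w n) (se w n)| ≤ Qnorm a h b w n := by
    rw [Qnorm_eq']; exact le_trans (le_max_left _ _) (le_max_right _ _)
  have hK2 : (0:ℤ) ≤ K ^ 2 * |m| := by positivity
  nlinarith [sq_nonneg (S1 - S2), mul_le_mul_of_nonneg_left hq1 hK2,
    mul_le_mul_of_nonneg_left hq2 hK2, abs_nonneg (Qval a h b (pe w n) (re w n)),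
    abs_nonneg (Qval a h b (qe w n) (se w n))]

lemma rho_bounds (hw : ∀ n, w n = Lm ∨ w n = Rm) (n : ℕ) :
    ((te w n : ℤ) : ℝ) / 2 ≤ (spectralRadius ℂ ((pathMat w n).map ((↑) : ℤ → ℂ))).toReal ∧
    (spectralRadius ℂ ((pathMat w n).map ((↑) : ℤ → ℂ))).toReal ≤ 2 * ((te w n : ℤ) : ℝ) := by
  have h2t : (2:ℝ) ≤ ((te w n : ℤ):ℝ) := by exact_mod_cast te_pos hw n
  apply rho_toReal_bounds _ _ h2t
  · simp only [Matrix.map_apply]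
    have : te w n = pathMat w n 0 0 + pathMat w n 1 1 := rfl
    rw [this]
    push_cast
    ring
  · simp only [Matrix.map_apply]
    have hdet := (inv hw n).2.2.2.2
    have : (pe w n : ℂ) * (se w n : ℂ) - (qe w n : ℂ) * (re w n : ℂ) = 1 := by
      exact_mod_cast congrArg (fun z : ℤ => (z : ℂ)) hdet
    exact this

/-! ### Degenerate case: both exponents vanish -/

lemma C_pos {a h b : ℤ} (hD : h ^ 2 - 4 * a * b ≠ 0) : 1 ≤ |a| + |h| + |b| := by
  by_contra hc
  push_neg at hc
  have ha : a = 0 := by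
    have := abs_nonneg a; have := abs_nonneg h; have := abs_nonneg b
    have : |a| = 0 := by omega
    exact abs_eq_zero.mp this
  have hh : h = 0 := by
    have := abs_nonneg a; have := abs_nonneg h; have := abs_nonneg b
    have : |h| = 0 := by omega
    exact abs_eq_zero.mp this
  have hb : b = 0 := by
    have := abs_nonneg a; have := abs_nonneg h; have := abs_nonneg b
    have : |b| = 0 := by omega
    exact abs_eq_zero.mp this
  rw [ha, hh, hb] at hD
  norm_num at hD

lemma degenerate_LyapQ {a h b : ℤ} (hD : h ^ 2 - 4 * a * b ≠ 0)
    (hw : ∀ n, w n = Lm ∨ w n = Rm) {n1 : ℕ}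
    (hcon : (∀ n, n1 ≤ n → w n = Lm) ∨ (∀ n, n1 ≤ n → w n = Rm)) :
    LyapQ a h b w = 0 := by
  have hlin := Ee_linear hw hcon
  set C : ℤ := |a| + |h| + |b| with hC
  have hC1 : (1:ℤ) ≤ C := C_pos hD
  have hEn1 : (2:ℤ) ≤ Ee w n1 := Ee_pos hw n1
  have hten : Tendsto (fun n : ℕ => Real.log ((Qnorm a h b w n : ℤ) : ℝ) / (n:ℝ)) atTop (nhds 0) := by
    apply log_div_tendsto_zero _ ((C * 4 * Ee w n1 ^ 2 : ℤ) : ℝ) 2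
    · filter_upwards with n
      exact_mod_cast Qnorm_pos a h b hD hw n
    · filter_upwards with n
      have h1 : Qnorm a h b w n ≤ C * (2 * Ee w n) ^ 2 := Qnorm_upper a h b hw n
      have h2 : Ee w n ≤ Ee w n1 * ((n:ℤ) + 1) := hlin n
      have h3 : (0:ℤ) ≤ Ee w n := le_trans (by norm_num) (Ee_pos hw n)
      have h4 : Qnorm a h b w n ≤ (C * 4 * Ee w n1 ^ 2) * ((n:ℤ)+1)^2 := by
        calc Qnorm a h b w n ≤ C * (2 * Ee w n) ^ 2 := h1
          _ ≤ C * (2 * (Ee w n1 * ((n:ℤ)+1))) ^ 2 := by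
              have hsq : (2 * Ee w n) ^ 2 ≤ (2 * (Ee w n1 * ((n:ℤ)+1))) ^ 2 := by
                apply pow_le_pow_left₀ (by linarith) (by linarith)
              exact mul_le_mul_of_nonneg_left hsq (by linarith)
          _ = (C * 4 * Ee w n1 ^ 2) * ((n:ℤ)+1)^2 := by ring
      calc ((Qnorm a h b w n : ℤ) : ℝ) ≤ (((C * 4 * Ee w n1 ^ 2) * ((n:ℤ)+1)^2 : ℤ) : ℝ) := by
            exact_mod_cast h4
        _ = ((C * 4 * Ee w n1 ^ 2 : ℤ) : ℝ) * ((n:ℝ)+1)^2 := by push_cast; ring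
  exact hten.limsup_eq

lemma degenerate_Lyap (hw : ∀ n, w n = Lm ∨ w n = Rm) {n1 : ℕ}
    (hcon : (∀ n, n1 ≤ n → w n = Lm) ∨ (∀ n, n1 ≤ n → w n = Rm)) :
    Lyap w = 0 := by
  have hlin := Ee_linear hw hcon
  have hEn1 : (2:ℤ) ≤ Ee w n1 := Ee_pos hw n1
  have hten : Tendsto (fun n : ℕ =>
      Real.log ((spectralRadius ℂ ((pathMat w n).map ((↑) : ℤ → ℂ))).toReal) / (n:ℝ))
      atTop (nhds 0) := by
    apply log_div_tendsto_zero _ ((2 * Ee w n1 : ℤ) : ℝ) 1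
    · filter_upwards with n
      have h1 := (rho_bounds hw n).1
      have h2 : (2:ℝ) ≤ ((te w n : ℤ):ℝ) := by exact_mod_cast te_pos hw n
      linarith
    · filter_upwards with n
      have h1 := (rho_bounds hw n).2
      have h2 : te w n ≤ Ee w n := te_le_Ee hw n
      have h3 : Ee w n ≤ Ee w n1 * ((n:ℤ)+1) := hlin n
      have h4 : (2:ℤ) * te w n ≤ (2 * Ee w n1) * ((n:ℤ)+1) := by nlinarith
      have h5 : (2:ℝ) * ((te w n : ℤ):ℝ) ≤ ((2 * Ee w n1 : ℤ):ℝ) * ((n:ℝ)+1) := by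
        exact_mod_cast h4
      calc (spectralRadius ℂ ((pathMat w n).map ((↑) : ℤ → ℂ))).toReal
          ≤ 2 * ((te w n : ℤ):ℝ) := h1
        _ ≤ ((2 * Ee w n1 : ℤ):ℝ) * ((n:ℝ)+1) := h5
        _ = ((2 * Ee w n1 : ℤ):ℝ) * ((n:ℝ)+1)^1 := by ring
  exact hten.limsup_eq

/-! ### Growth case -/

lemma log2_le_one : Real.log 2 ≤ 1 := by
  have := Real.log_le_sub_one_of_pos (by norm_num : (0:ℝ) < 2)
  linarith

lemma yf_bounds (hw : ∀ n, w n = Lm ∨ w n = Rm) :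
    ∀ᶠ n in atTop, 0 ≤ Real.log ((te w n : ℤ):ℝ) / (n:ℝ) ∧
      Real.log ((te w n : ℤ):ℝ) / (n:ℝ) ≤ 2 := by
  filter_upwards [eventually_ge_atTop 1] with n hn
  have hnr : (1:ℝ) ≤ (n:ℝ) := by exact_mod_cast hn
  have ht2 : (2:ℝ) ≤ ((te w n : ℤ):ℝ) := by exact_mod_cast te_pos hw n
  have hlog0 : 0 ≤ Real.log ((te w n : ℤ):ℝ) := Real.log_nonneg (by linarith)
  constructor
  · exact div_nonneg hlog0 (by linarith)
  · have hup : te w n ≤ 2 ^ (n+1) := le_trans (te_le_Ee hw n) (Ee_band hw n)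
    have hupr : ((te w n : ℤ):ℝ) ≤ (2:ℝ) ^ (n+1) := by exact_mod_cast hup
    have hlog : Real.log ((te w n : ℤ):ℝ) ≤ (n+1) * Real.log 2 := by
      calc Real.log ((te w n : ℤ):ℝ) ≤ Real.log ((2:ℝ) ^ (n+1)) :=
            Real.log_le_log (by linarith) hupr
        _ = (n+1) * Real.log 2 := by rw [Real.log_pow]; push_cast; ring
    have h2n : ((n:ℝ)+1) ≤ 2 * (n:ℝ) := by linarith
    rw [div_le_iff₀ (by linarith : (0:ℝ) < (n:ℝ))]
    have hl2 : 0 ≤ Real.log 2 := Real.log_nonneg (by norm_num)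
    calc Real.log ((te w n : ℤ):ℝ) ≤ ((n:ℝ)+1) * Real.log 2 := by push_cast at hlog ⊢; linarith
      _ ≤ (2 * (n:ℝ)) * 1 := by nlinarith [log2_le_one]
      _ = 2 * (n:ℝ) := by ring

lemma tendsto_const_div_atTop (c : ℝ) : Tendsto (fun n : ℕ => c / (n:ℝ)) atTop (nhds 0) :=
  tendsto_const_nhds.div_atTop tendsto_natCast_atTop_atTop

lemma growth_Lyap (hw : ∀ n, w n = Lm ∨ w n = Rm) :
    Lyap w = limsup (fun n : ℕ => Real.log ((te w n : ℤ):ℝ) / (n:ℝ)) atTop := by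
  have hyB := yf_bounds hw
  have hbase : ∀ᶠ n : ℕ in atTop, (1:ℝ) ≤ (n:ℝ) ∧
      |Real.log ((spectralRadius ℂ ((pathMat w n).map ((↑) : ℤ → ℂ))).toReal)
        - Real.log ((te w n : ℤ):ℝ)| ≤ Real.log 2 := by
    filter_upwards [eventually_ge_atTop 1] with n hn
    have hnr : (1:ℝ) ≤ (n:ℝ) := by exact_mod_cast hn
    have ht2 : (2:ℝ) ≤ ((te w n : ℤ):ℝ) := by exact_mod_cast te_pos hw n
    obtain ⟨hr1, hr2⟩ := rho_bounds hw n
    refine ⟨hnr, ?_⟩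
    rw [abs_le]
    constructor
    · have hlow : Real.log (((te w n : ℤ):ℝ) / 2)
          ≤ Real.log ((spectralRadius ℂ ((pathMat w n).map ((↑) : ℤ → ℂ))).toReal) :=
        Real.log_le_log (by linarith) hr1
      rw [Real.log_div (by linarith) (by norm_num)] at hlow
      linarith
    · have hup : Real.log ((spectralRadius ℂ ((pathMat w n).map ((↑) : ℤ → ℂ))).toReal)
          ≤ Real.log (2 * ((te w n : ℤ):ℝ)) := Real.log_le_log (by linarith) hr2
      rw [Real.log_mul (by norm_num) (by linarith)] at hup
      linarith
  apply limsup_eq_of_diff (B := 3)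
  · -- |rho f| ≤ 3
    filter_upwards [hyB, hbase] with n hy hb
    obtain ⟨hnr, habs⟩ := hb
    have ht2 : (2:ℝ) ≤ ((te w n : ℤ):ℝ) := by exact_mod_cast te_pos hw n
    have hylog : 0 ≤ Real.log ((te w n : ℤ):ℝ) := Real.log_nonneg (by linarith)
    have h1 : |Real.log ((spectralRadius ℂ ((pathMat w n).map ((↑) : ℤ → ℂ))).toReal)|
        ≤ Real.log ((te w n : ℤ):ℝ) + Real.log 2 := by
      have h2 := abs_sub_abs_le_abs_sub
        (Real.log ((spectralRadius ℂ ((pathMat w n).map ((↑) : ℤ → ℂ))).toReal))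
        (Real.log ((te w n : ℤ):ℝ))
      rw [abs_of_nonneg hylog] at h2
      linarith
    rw [abs_div, abs_of_nonneg (by linarith : (0:ℝ) ≤ (n:ℝ)),
      div_le_iff₀ (by linarith : (0:ℝ) < (n:ℝ))]
    have hyb : Real.log ((te w n : ℤ):ℝ) ≤ 2 * (n:ℝ) := by
      have h3 := hy.2
      rw [div_le_iff₀ (by linarith : (0:ℝ) < (n:ℝ))] at h3
      linarith
    nlinarith [log2_le_one, Real.log_nonneg (by norm_num : (1:ℝ) ≤ 2)]
  · -- |yf| ≤ 3
    filter_upwards [hyB] with n hy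
    have ht2 : (2:ℝ) ≤ ((te w n : ℤ):ℝ) := by exact_mod_cast te_pos hw n
    have hylog : 0 ≤ Real.log ((te w n : ℤ):ℝ) := Real.log_nonneg (by linarith)
    rw [abs_div, abs_of_nonneg hylog, abs_of_nonneg (Nat.cast_nonneg n : (0:ℝ) ≤ (n:ℝ))]
    calc Real.log ((te w n : ℤ):ℝ) / (n:ℝ) ≤ 2 := hy.2
      _ ≤ 3 := by norm_num
  · -- tendsto diff
    have hlo := tendsto_const_div_atTop (-(Real.log 2))
    have hhi := tendsto_const_div_atTop (Real.log 2)
    refine tendsto_of_tendsto_of_tendsto_of_le_of_le' hlo hhi ?_ ?_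
    · filter_upwards [hbase] with n hb
      obtain ⟨hnr, habs⟩ := hb
      rw [abs_le] at habs
      rw [← sub_div]
      exact div_le_div_of_nonneg_right habs.1 (by linarith)
    · filter_upwards [hbase] with n hb
      obtain ⟨hnr, habs⟩ := hb
      rw [abs_le] at habs
      rw [← sub_div]
      exact div_le_div_of_nonneg_right habs.2 (by linarith)

lemma growth_LyapQ {a h b al be ga de m : ℤ} (hD : h ^ 2 - 4 * a * b ≠ 0)
    (hw : ∀ n, w n = Lm ∨ w n = Rm) (hm : m ≠ 0)
    (hfact : ∀ x y, m * Qval a h b x y = (al * x + be * y) * (ga * x + de * y))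
    {n0 : ℕ} (hp1 : 0 < U1 al be w n0 * U2 al be w n0)
    (hp2 : 0 < U1 ga de w n0 * U2 ga de w n0) :
    LyapQ a h b w = limsup (fun n : ℕ => 2 * (Real.log ((te w n : ℤ):ℝ) / (n:ℝ))) atTop := by
  have hyB := yf_bounds hw
  set c1 : ℤ := 4 * Ee w n0 ^ 2 * |m| with hc1def
  have hc1 : (1:ℤ) ≤ c1 := by
    have h1 : (2:ℤ) ≤ Ee w n0 := Ee_pos hw n0
    have h2 : (1:ℤ) ≤ |m| := Int.one_le_abs hm
    have : (4:ℤ) ≤ Ee w n0 ^ 2 := by nlinarith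
    nlinarith
  set C2 : ℤ := 16 * (|a| + |h| + |b|) with hC2def
  have hC2 : (1:ℤ) ≤ C2 := by
    have := C_pos hD
    rw [hC2def]; linarith
  have hlow := caseB_lower hw hfact hp1 hp2
  have hup : ∀ n : ℕ, Qnorm a h b w n ≤ C2 * (((n:ℤ)+1)^2 * te w n ^ 2) := by
    intro n
    have h1 := Qnorm_upper a h b hw n
    have h2 := Ee_le_te hw n
    have h3 : (0:ℤ) ≤ Ee w n := le_trans (by norm_num) (Ee_pos hw n)
    have h4 : (0:ℤ) ≤ te w n := le_trans (by norm_num) (te_pos hw n)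
    have h5 : (2 * Ee w n)^2 ≤ (2 * ((2*(n:ℤ)+2) * te w n))^2 := by
      apply pow_le_pow_left₀ (by linarith) (by linarith)
    have hCpos : (0:ℤ) ≤ |a| + |h| + |b| := by positivity
    calc Qnorm a h b w n ≤ (|a| + |h| + |b|) * (2 * Ee w n) ^ 2 := h1
      _ ≤ (|a| + |h| + |b|) * (2 * ((2*(n:ℤ)+2) * te w n))^2 :=
          mul_le_mul_of_nonneg_left h5 hCpos
      _ = C2 * (((n:ℤ)+1)^2 * te w n ^ 2) := by rw [hC2def]; ring
  -- eventual two-sided bound on the difference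
  have hdiffb : ∀ᶠ n : ℕ in atTop,
      -(Real.log ((c1:ℤ):ℝ)) / (n:ℝ)
        ≤ Real.log ((Qnorm a h b w n : ℤ):ℝ) / (n:ℝ)
            - 2 * (Real.log ((te w n : ℤ):ℝ) / (n:ℝ)) ∧
      Real.log ((Qnorm a h b w n : ℤ):ℝ) / (n:ℝ)
            - 2 * (Real.log ((te w n : ℤ):ℝ) / (n:ℝ))
        ≤ Real.log ((C2:ℤ):ℝ) / (n:ℝ) + 2 * (Real.log ((n:ℝ)+1) / (n:ℝ)) := by
    filter_upwards [eventually_ge_atTop (max n0 1)] with n hn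
    have hn0 : n0 ≤ n := le_trans (le_max_left _ _) hn
    have hn1 : (1:ℝ) ≤ (n:ℝ) := by
      have : 1 ≤ n := le_trans (le_max_right _ _) hn
      exact_mod_cast this
    have hnpos : (0:ℝ) < (n:ℝ) := by linarith
    have htR : (2:ℝ) ≤ ((te w n : ℤ):ℝ) := by exact_mod_cast te_pos hw n
    have hQR : (1:ℝ) ≤ ((Qnorm a h b w n : ℤ):ℝ) := by
      exact_mod_cast Qnorm_pos a h b hD hw n
    have hc1R : (1:ℝ) ≤ ((c1:ℤ):ℝ) := by exact_mod_cast hc1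
    have hC2R : (1:ℝ) ≤ ((C2:ℤ):ℝ) := by exact_mod_cast hC2
    constructor
    · -- lower bound
      have h1 : ((te w n : ℤ):ℝ)^2 ≤ ((c1:ℤ):ℝ) * ((Qnorm a h b w n : ℤ):ℝ) := by
        have := hlow n hn0
        calc ((te w n : ℤ):ℝ)^2 = ((te w n ^ 2 : ℤ):ℝ) := by push_cast; ring
          _ ≤ ((c1 * Qnorm a h b w n : ℤ):ℝ) := by exact_mod_cast this
          _ = ((c1:ℤ):ℝ) * ((Qnorm a h b w n : ℤ):ℝ) := by push_cast; ring
      have h2 : 2 * Real.log ((te w n : ℤ):ℝ)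
          ≤ Real.log ((c1:ℤ):ℝ) + Real.log ((Qnorm a h b w n : ℤ):ℝ) := by
        calc 2 * Real.log ((te w n : ℤ):ℝ) = Real.log (((te w n : ℤ):ℝ)^2) := by
              rw [Real.log_pow]; push_cast; ring
          _ ≤ Real.log (((c1:ℤ):ℝ) * ((Qnorm a h b w n : ℤ):ℝ)) :=
              Real.log_le_log (by positivity) h1
          _ = Real.log ((c1:ℤ):ℝ) + Real.log ((Qnorm a h b w n : ℤ):ℝ) :=
              Real.log_mul (by linarith) (by linarith)
      have h3 : -(Real.log ((c1:ℤ):ℝ))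
          ≤ Real.log ((Qnorm a h b w n : ℤ):ℝ) - 2 * Real.log ((te w n : ℤ):ℝ) := by
        linarith
      have h4 := div_le_div_of_nonneg_right h3 (by linarith : (0:ℝ) ≤ (n:ℝ))
      calc -(Real.log ((c1:ℤ):ℝ)) / (n:ℝ)
          ≤ (Real.log ((Qnorm a h b w n : ℤ):ℝ) - 2 * Real.log ((te w n : ℤ):ℝ)) / (n:ℝ) := h4
        _ = Real.log ((Qnorm a h b w n : ℤ):ℝ) / (n:ℝ)
            - 2 * (Real.log ((te w n : ℤ):ℝ) / (n:ℝ)) := by ring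
    · -- upper bound
      have h1 : ((Qnorm a h b w n : ℤ):ℝ)
          ≤ ((C2:ℤ):ℝ) * (((n:ℝ)+1)^2 * ((te w n : ℤ):ℝ)^2) := by
        have := hup n
        calc ((Qnorm a h b w n : ℤ):ℝ) ≤ ((C2 * (((n:ℤ)+1)^2 * te w n ^ 2) : ℤ):ℝ) := by
              exact_mod_cast this
          _ = ((C2:ℤ):ℝ) * (((n:ℝ)+1)^2 * ((te w n : ℤ):ℝ)^2) := by push_cast; ring
      have h2 : Real.log ((Qnorm a h b w n : ℤ):ℝ)
          ≤ Real.log ((C2:ℤ):ℝ) + 2 * Real.log ((n:ℝ)+1) + 2 * Real.log ((te w n : ℤ):ℝ) := by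
        calc Real.log ((Qnorm a h b w n : ℤ):ℝ)
            ≤ Real.log (((C2:ℤ):ℝ) * (((n:ℝ)+1)^2 * ((te w n : ℤ):ℝ)^2)) :=
              Real.log_le_log (by linarith) h1
          _ = Real.log ((C2:ℤ):ℝ) + Real.log ((((n:ℝ)+1)^2 * ((te w n : ℤ):ℝ)^2)) := by
              rw [Real.log_mul (by linarith) (by positivity)]
          _ = Real.log ((C2:ℤ):ℝ) + Real.log (((n:ℝ)+1)^2) + Real.log (((te w n : ℤ):ℝ)^2) := by
              rw [Real.log_mul (by positivity) (by positivity)]; ring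
          _ = Real.log ((C2:ℤ):ℝ) + 2 * Real.log ((n:ℝ)+1) + 2 * Real.log ((te w n : ℤ):ℝ) := by
              rw [Real.log_pow, Real.log_pow]; push_cast; ring
      have h3 : Real.log ((Qnorm a h b w n : ℤ):ℝ) - 2 * Real.log ((te w n : ℤ):ℝ)
          ≤ Real.log ((C2:ℤ):ℝ) + 2 * Real.log ((n:ℝ)+1) := by linarith
      have h4 := div_le_div_of_nonneg_right h3 (by linarith : (0:ℝ) ≤ (n:ℝ))
      calc Real.log ((Qnorm a h b w n : ℤ):ℝ) / (n:ℝ)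
            - 2 * (Real.log ((te w n : ℤ):ℝ) / (n:ℝ))
          = (Real.log ((Qnorm a h b w n : ℤ):ℝ) - 2 * Real.log ((te w n : ℤ):ℝ)) / (n:ℝ) := by
            ring
        _ ≤ (Real.log ((C2:ℤ):ℝ) + 2 * Real.log ((n:ℝ)+1)) / (n:ℝ) := h4
        _ = Real.log ((C2:ℤ):ℝ) / (n:ℝ) + 2 * (Real.log ((n:ℝ)+1) / (n:ℝ)) := by ring
  set B : ℝ := Real.log ((C2:ℤ):ℝ) + 7 with hBdef
  have hlogC2 : 0 ≤ Real.log ((C2:ℤ):ℝ) := Real.log_nonneg (by exact_mod_cast hC2)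
  apply limsup_eq_of_diff (B := B)
  · -- |Qf| ≤ B
    filter_upwards [hdiffb, hyB, eventually_ge_atTop 1] with n hd hy hn
    have hn1 : (1:ℝ) ≤ (n:ℝ) := by exact_mod_cast hn
    have hQR : (1:ℝ) ≤ ((Qnorm a h b w n : ℤ):ℝ) := by
      exact_mod_cast Qnorm_pos a h b hD hw n
    have hQf0 : 0 ≤ Real.log ((Qnorm a h b w n : ℤ):ℝ) / (n:ℝ) :=
      div_nonneg (Real.log_nonneg hQR) (by linarith)
    have hlogn : Real.log ((n:ℝ)+1) ≤ (n:ℝ) := by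
      have := Real.log_le_sub_one_of_pos (by linarith : (0:ℝ) < (n:ℝ)+1)
      linarith
    have hln : Real.log ((n:ℝ)+1) / (n:ℝ) ≤ 1 := by
      rw [div_le_one (by linarith)]
      exact hlogn
    have hlogC2n : Real.log ((C2:ℤ):ℝ) / (n:ℝ) ≤ Real.log ((C2:ℤ):ℝ) :=
      div_le_self hlogC2 hn1
    have hupQ : Real.log ((Qnorm a h b w n : ℤ):ℝ) / (n:ℝ)
        ≤ 2 * (Real.log ((te w n : ℤ):ℝ) / (n:ℝ)) + Real.log ((C2:ℤ):ℝ) + 2 := by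
      have := hd.2
      nlinarith [hln, hlogC2n]
    rw [abs_of_nonneg hQf0]
    have hy2 := hy.2
    rw [hBdef]
    linarith
  · -- |2yf| ≤ B
    filter_upwards [hyB] with n hy
    have h0 : 0 ≤ Real.log ((te w n : ℤ):ℝ) / (n:ℝ) := hy.1
    rw [abs_of_nonneg (by linarith : (0:ℝ) ≤ 2 * (Real.log ((te w n : ℤ):ℝ) / (n:ℝ)))]
    rw [hBdef]
    linarith [hy.2]
  · -- tendsto diff
    have hlo := tendsto_const_div_atTop (-(Real.log ((c1:ℤ):ℝ)))
    have hhi : Tendsto (fun n : ℕ => Real.log ((C2:ℤ):ℝ) / (n:ℝ)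
        + 2 * (Real.log ((n:ℝ)+1) / (n:ℝ))) atTop (nhds 0) := by
      have ha := tendsto_const_div_atTop (Real.log ((C2:ℤ):ℝ))
      have hb := tendsto_log_succ_div.const_mul (2:ℝ)
      simpa using ha.add hb
    refine tendsto_of_tendsto_of_tendsto_of_le_of_le' hlo hhi ?_ ?_
    · exact hdiffb.mono fun n hn => by
        have := hn.1
        rw [neg_div] at this ⊢
        exact this
    · exact hdiffb.mono fun n hn => hn.2

/-- For an indefinite integer binary quadratic form representing zero
(discriminant a positive perfect square), `Λ_Q(w) = 2 Λ(w)` for every path `w`. -/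
theorem lyapunov_indefinite_representing_zero (a h b : ℤ)
    (hD : 0 < h ^ 2 - 4 * a * b) (hsq : IsSquare (h ^ 2 - 4 * a * b))
    (w : ℕ → Matrix (Fin 2) (Fin 2) ℤ) (hw : ∀ n, w n = Lm ∨ w n = Rm) :
    LyapQ a h b w = 2 * Lyap w := by
  have hDne : h ^ 2 - 4 * a * b ≠ 0 := ne_of_gt hD
  obtain ⟨al, be, ga, de, m, hm, hDel, hfact⟩ := exists_factorization a h b hD hsq
  by_cases hc1 : ∃ n, 0 < U1 al be w n * U2 al be w n
  · by_cases hc2 : ∃ n, 0 < U1 ga de w n * U2 ga de w n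
    · -- growth case
      obtain ⟨na, hpa⟩ := hc1
      obtain ⟨nb, hpb⟩ := hc2
      have hp1 : 0 < U1 al be w (max na nb) * U2 al be w (max na nb) :=
        Upos_persist hw hpa (max na nb) (le_max_left _ _)
      have hp2 : 0 < U1 ga de w (max na nb) * U2 ga de w (max na nb) :=
        Upos_persist hw hpb (max na nb) (le_max_right _ _)
      rw [growth_LyapQ hDne hw hm hfact hp1 hp2, growth_Lyap hw]
      apply limsup_two_mul (B := 2)
      filter_upwards [yf_bounds hw] with n hy
      rw [abs_of_nonneg hy.1]
      exact hy.2
    · -- degenerate via second form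
      push_neg at hc2
      have hns2 : ∀ n, U1 ga de w n * U2 ga de w n ≤ 0 := fun n => not_lt.mp (by
        intro hcon
        exact absurd hcon (by simpa using hc2 n))
      have hDel2 : ga * be - de * al ≠ 0 := by
        intro hh
        apply hDel
        linarith [hh]
      obtain ⟨n1, hcon⟩ := degenerate_word hw hDel2 hns2
      rw [degenerate_LyapQ hDne hw hcon, degenerate_Lyap hw hcon]
      ring
  · push_neg at hc1
    have hns1 : ∀ n, U1 al be w n * U2 al be w n ≤ 0 := fun n => not_lt.mp (by
      intro hcon
      exact absurd hcon (by simpa using hc1 n))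
    obtain ⟨n1, hcon⟩ := degenerate_word hw hDel hns1
    rw [degenerate_LyapQ hDne hw hcon, degenerate_Lyap hw hcon]
    ring

end
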